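/- Let X ∈ ℝ^{n×p} with Σ = XᵀX/n, let S ⊆ {1,…,p} with |S| = s be such that Σ_{SS} is invertible with smallest eigenvalue φ_min(S). Then for every j ∈ S and every β*_j ∈ ℝ, ‖(Π_S − Π_{S∖{j}}) X_j β*_j‖₂ ≥ √n · φ_min(S)^{1/2} · |β*_j|; equivalently, ‖X_j − Π_{S∖{j}} X_j‖₂² = ‖X_j‖₂² − ‖Π_{S∖{j}} X_j‖₂² ≥ n φ_min(S). -/

import Mathlib

open Matrix Finset

noncomputable section

/-- Squared Euclidean norm of a vector. -/
def sqNorm {n : ℕ} (v : Fin n → ℝ) : ℝ := ∑ i, (v i) ^ 2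

/-- Gram matrix Σ = XᵀX/n. -/
def gram {n p : ℕ} (X : Matrix (Fin n) (Fin p) ℝ) : Matrix (Fin p) (Fin p) ℝ :=
  (1 / (n : ℝ)) • (X.transpose * X)

/-- Principal submatrix Σ_{SS} of the Gram matrix. -/
def gramSub {n p : ℕ} (X : Matrix (Fin n) (Fin p) ℝ) (S : Finset (Fin p)) :
    Matrix {x // x ∈ S} {x // x ∈ S} ℝ :=
  (gram X).submatrix (fun a => a.1) (fun a => a.1)

/-- Orthogonal projection Π_S onto the span of the columns of `X` indexed by `S`. -/
def projS {n p : ℕ} (X : Matrix (Fin n) (Fin p) ℝ) (S : Finset (Fin p))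
    (v : Fin n → ℝ) : Fin n → ℝ :=
  (Submodule.orthogonalProjection
      (Submodule.span ℝ ((fun j => (WithLp.equiv 2 (Fin n → ℝ)).symm (X.transpose j)) '' S))
      ((WithLp.equiv 2 (Fin n → ℝ)).symm v) : EuclideanSpace ℝ (Fin n))

/-- The smallest eigenvalue φ_min(S) of Σ_{SS}, as the minimum of the Rayleigh quotient. -/
def phiMin {n p : ℕ} (X : Matrix (Fin n) (Fin p) ℝ) (S : Finset (Fin p)) : ℝ :=
  sInf {v | ∃ u : {x // x ∈ S} → ℝ, (∑ a, (u a) ^ 2) = 1 ∧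
    v = u ⬝ᵥ (gramSub X S).mulVec u}

/-- squared norm as a norm in Euclidean space -/
lemma sqNorm_eq {n : ℕ} (v : Fin n → ℝ) :
    sqNorm v = ‖((WithLp.equiv 2 (Fin n → ℝ)).symm v : EuclideanSpace ℝ (Fin n))‖ ^ 2 := by
  rw [EuclideanSpace.norm_eq, Real.sq_sqrt (by positivity)]
  simp [sqNorm, sq_abs]

/-- pointwise evaluation of finite sums in Euclidean space -/
lemma eucl_sum_apply {n : ℕ} {ι : Type*} [DecidableEq ι] (t : Finset ι)
    (v : ι → EuclideanSpace ℝ (Fin n)) (i : Fin n) :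
    (∑ a ∈ t, v a) i = ∑ a ∈ t, v a i := by
  induction t using Finset.induction with
  | empty => rfl
  | insert _ _ h ih =>
    rw [Finset.sum_insert h, Finset.sum_insert h, ← ih]
    rfl

/-- The Rayleigh quotient identity `‖X u‖² = n uᵀ Σ_SS u`. -/
lemma rayleigh_eq {n p : ℕ} (hn : 0 < n) (X : Matrix (Fin n) (Fin p) ℝ) (S : Finset (Fin p))
    (u : {x // x ∈ S} → ℝ) :
    sqNorm (fun i => ∑ a : {x // x ∈ S}, u a * X i a)
      = n * (u ⬝ᵥ (gramSub X S).mulVec u) := by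
  have hn' : (n:ℝ) ≠ 0 := Nat.cast_ne_zero.mpr hn.ne'
  simp only [sqNorm, gramSub, _root_.gram, Matrix.mulVec, dotProduct, Matrix.submatrix_apply,
    Matrix.smul_apply, Matrix.mul_apply, Matrix.transpose_apply, smul_eq_mul,
    Finset.mul_sum, Finset.sum_mul]
  calc ∑ i, (∑ a : {x // x ∈ S}, u a * X i a)^2
      = ∑ i, ∑ a : {x // x ∈ S}, ∑ b : {x // x ∈ S}, (u a * X i a) * (u b * X i b) := by
        refine Finset.sum_congr rfl fun i _ => ?_
        rw [sq, Finset.sum_mul_sum]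
    _ = ∑ a : {x // x ∈ S}, ∑ i, ∑ b : {x // x ∈ S}, (u a * X i a) * (u b * X i b) :=
        Finset.sum_comm
    _ = ∑ a : {x // x ∈ S}, ∑ b : {x // x ∈ S}, ∑ i, (u a * X i a) * (u b * X i b) :=
        Finset.sum_congr rfl fun a _ => Finset.sum_comm
    _ = ∑ a : {x // x ∈ S}, ∑ b : {x // x ∈ S}, ∑ i,
          (n:ℝ) * (u a * (1 / n * (X i a * X i b) * u b)) := by
        refine Finset.sum_congr rfl fun a _ => Finset.sum_congr rfl fun b _ =>
          Finset.sum_congr rfl fun i _ => ?_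
        field_simp

/-- Every Rayleigh value is nonnegative. -/
lemma rayleigh_nonneg {n p : ℕ} (hn : 0 < n) (X : Matrix (Fin n) (Fin p) ℝ)
    (S : Finset (Fin p)) (u : {x // x ∈ S} → ℝ) :
    0 ≤ u ⬝ᵥ (gramSub X S).mulVec u := by
  have h := rayleigh_eq hn X S u
  have h0 : 0 ≤ sqNorm (fun i => ∑ a : {x // x ∈ S}, u a * X i a) :=
    Finset.sum_nonneg fun i _ => sq_nonneg _
  have hn0 : (0:ℝ) < n := Nat.cast_pos.mpr hn
  nlinarith

/-- for `j ∈ S` with Σ_{SS} invertible,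
`‖(Π_S − Π_{S∖{j}})X_j β*_j‖₂ ≥ √n·φ_min(S)^{1/2}·|β*_j|`; equivalently,
`‖X_j − Π_{S∖{j}}X_j‖₂² = ‖X_j‖₂² − ‖Π_{S∖{j}}X_j‖₂² ≥ n·φ_min(S)`. -/
theorem stmt_13 (n p : ℕ) (hn : 0 < n) (X : Matrix (Fin n) (Fin p) ℝ)
    (S : Finset (Fin p)) (s : ℕ) (hcard : S.card = s)
    (hinv : IsUnit (gramSub X S).det) (j : Fin p) (hj : j ∈ S) :
    (∀ c : ℝ, Real.sqrt n * Real.sqrt (phiMin X S) * |c| ≤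
      Real.sqrt (sqNorm (projS X S (c • fun i => X i j)
        - projS X (S.erase j) (c • fun i => X i j)))) ∧
    sqNorm ((fun i => X i j) - projS X (S.erase j) (fun i => X i j))
      = sqNorm (fun i => X i j) - sqNorm (projS X (S.erase j) (fun i => X i j)) ∧
    (n : ℝ) * phiMin X S ≤ sqNorm ((fun i => X i j) - projS X (S.erase j) (fun i => X i j)) := by
  classical
  have hn0 : (0:ℝ) < n := Nat.cast_pos.mpr hn
  -- the column family in Euclidean space
  set f : Fin p → EuclideanSpace ℝ (Fin n) :=
    fun k => (WithLp.equiv 2 (Fin n → ℝ)).symm (X.transpose k) with hfdef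
  set K : Submodule ℝ (EuclideanSpace ℝ (Fin n)) := Submodule.span ℝ (f '' ↑S) with hK
  set K' : Submodule ℝ (EuclideanSpace ℝ (Fin n)) :=
    Submodule.span ℝ (f '' ↑(S.erase j)) with hK'
  set w : EuclideanSpace ℝ (Fin n) :=
    (Submodule.orthogonalProjection K' (f j) : EuclideanSpace ℝ (Fin n)) with hw
  -- identify the projections in the statement
  have hproj1 : projS X (S.erase j) (fun i => X i j) = (w : Fin n → ℝ) := rfl
  -- coefficients of w in the span
  obtain ⟨c, hc⟩ : ∃ c : {x // x ∈ S.erase j} → ℝ, ∑ a, c a • f ↑a = w := by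
    have hmem : w ∈ K' := (Submodule.orthogonalProjection K' (f j)).2
    rw [hK', Set.image_eq_range] at hmem
    exact (Submodule.mem_span_range_iff_exists_fun ℝ).mp hmem
  -- the combined coefficient vector
  set U : Fin p → ℝ := fun k =>
    if k = j then 1 else if h : k ∈ S.erase j then -(c ⟨k, h⟩) else 0 with hU
  set u : {x // x ∈ S} → ℝ := fun a => U ↑a with hu
  have hUj : U j = 1 := by simp [hU]
  have huj : u ⟨j, hj⟩ = 1 := hUj
  -- the residual is a combination of columns of S
  have hres : f j - w = ∑ a : {x // x ∈ S}, u a • f ↑a := by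
    have h1 : ∑ a : {x // x ∈ S}, u a • f ↑a = ∑ k ∈ S, U k • f k := by
      rw [← Finset.sum_coe_sort S (fun k => U k • f k)]
    have h2 : ∑ k ∈ S.erase j, U k • f k + U j • f j = ∑ k ∈ S, U k • f k :=
      Finset.sum_erase_add S _ hj
    have h3 : ∑ k ∈ S.erase j, U k • f k = -w := by
      rw [← Finset.sum_coe_sort (S.erase j) (fun k => U k • f k)]
      have : ∀ a : {x // x ∈ S.erase j}, U ↑a • f ↑a = -(c a • f ↑a) := by
        intro a
        have hne : (a : Fin p) ≠ j := (Finset.mem_erase.mp a.2).1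
        have : U ↑a = -(c a) := by
          rw [hU]
          simp only [if_neg hne, dif_pos a.2]
        rw [this, neg_smul]
      rw [Finset.sum_congr rfl fun a _ => this a, Finset.sum_neg_distrib, hc]
    rw [h1, ← h2, h3, hUj, one_smul]
    abel
  -- pointwise form of the residual
  have hresfun : ((WithLp.equiv 2 (Fin n → ℝ)).symm
      (fun i => ∑ a : {x // x ∈ S}, u a * X i a) : EuclideanSpace ℝ (Fin n)) = f j - w := by
    rw [hres]
    ext i
    rw [eucl_sum_apply]
    show (∑ a : {x // x ∈ S}, u a * X i a) = _
    refine Finset.sum_congr rfl fun a _ => ?_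
    rfl
  -- the key norm identity
  have hnorm : ‖f j - w‖ ^ 2 = n * (u ⬝ᵥ (gramSub X S).mulVec u) := by
    rw [← hresfun, ← sqNorm_eq]
    exact rayleigh_eq hn X S u
  set Q : ℝ := u ⬝ᵥ (gramSub X S).mulVec u with hQ
  have hQ0 : 0 ≤ Q := rayleigh_nonneg hn X S u
  set t : ℝ := ∑ a : {x // x ∈ S}, (u a) ^ 2 with ht
  have ht1 : 1 ≤ t := by
    have h := Finset.single_le_sum (f := fun a : {x // x ∈ S} => (u a) ^ 2)
      (fun a _ => sq_nonneg _) (Finset.mem_univ ⟨j, hj⟩)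
    have h2 : (u ⟨j, hj⟩) ^ 2 ≤ t := h
    rw [huj] at h2
    simpa using h2
  have ht0 : 0 < t := lt_of_lt_of_le one_pos ht1
  -- phiMin ≤ Q / t
  have hphi_le : phiMin X S ≤ t⁻¹ * Q := by
    have hbdd : BddBelow {v | ∃ u : {x // x ∈ S} → ℝ, (∑ a, (u a) ^ 2) = 1 ∧
        v = u ⬝ᵥ (gramSub X S).mulVec u} := by
      refine ⟨0, fun v hv => ?_⟩
      obtain ⟨u0, _, rfl⟩ := hv
      exact rayleigh_nonneg hn X S u0
    have hmem : t⁻¹ * Q ∈ {v | ∃ u : {x // x ∈ S} → ℝ, (∑ a, (u a) ^ 2) = 1 ∧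
        v = u ⬝ᵥ (gramSub X S).mulVec u} := by
      refine ⟨fun a => (Real.sqrt t)⁻¹ * u a, ?_, ?_⟩
      · have hs : (Real.sqrt t) ^ 2 = t := Real.sq_sqrt ht0.le
        have : ∑ a : {x // x ∈ S}, ((Real.sqrt t)⁻¹ * u a) ^ 2
            = ((Real.sqrt t)⁻¹)^2 * ∑ a : {x // x ∈ S}, (u a) ^ 2 := by
          rw [Finset.mul_sum]
          exact Finset.sum_congr rfl fun a _ => by ring
        rw [this, ← ht, inv_pow, hs]
        exact inv_mul_cancel₀ ht0.ne'
      · have hsm : (fun a => (Real.sqrt t)⁻¹ * u a) = (Real.sqrt t)⁻¹ • u := rfl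
        rw [hsm, Matrix.mulVec_smul, dotProduct_smul, smul_dotProduct]
        have hs : (Real.sqrt t) ^ 2 = t := Real.sq_sqrt ht0.le
        rw [smul_smul, smul_eq_mul, ← hQ]
        rw [show (Real.sqrt t)⁻¹ * (Real.sqrt t)⁻¹ = ((Real.sqrt t)^2)⁻¹ by
          rw [sq, mul_inv]]
        rw [hs]
    exact csInf_le hbdd hmem
  -- part 3
  have part3 : (n : ℝ) * phiMin X S ≤ ‖f j - w‖ ^ 2 := by
    rw [hnorm]
    have h1 : t⁻¹ * Q ≤ Q := by
      nlinarith [inv_mul_cancel₀ ht0.ne', inv_pos.mpr ht0, hQ0, ht1]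
    have h2 := hphi_le.trans h1
    nlinarith
  -- translate statement sqNorms into norms
  have hsq_res : sqNorm ((fun i => X i j) - projS X (S.erase j) (fun i => X i j))
      = ‖f j - w‖ ^ 2 := by
    rw [sqNorm_eq]
    rfl
  refine ⟨?_, ?_, ?_⟩
  · intro cc
    -- projections of the scaled vector
    have hmemK : f j ∈ K := Submodule.subset_span ⟨j, Finset.mem_coe.mpr hj, rfl⟩
    have hp1 : projS X S (cc • fun i => X i j) = ((cc • f j : EuclideanSpace ℝ (Fin n)) : Fin n → ℝ) := by
      show ((Submodule.orthogonalProjection K (cc • f j) : EuclideanSpace ℝ (Fin n)) : Fin n → ℝ) = _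
      exact congrArg WithLp.ofLp (Submodule.starProjection_eq_self_iff.mpr (K.smul_mem cc hmemK))
    have hp2 : projS X (S.erase j) (cc • fun i => X i j)
        = ((cc • w : EuclideanSpace ℝ (Fin n)) : Fin n → ℝ) := by
      show ((Submodule.orthogonalProjection K' (cc • f j) : EuclideanSpace ℝ (Fin n)) : Fin n → ℝ) = _
      rw [_root_.map_smul]
      simp [hw]
    rw [hp1, hp2]
    have hee : ((WithLp.equiv 2 (Fin n → ℝ)).symm
        (((cc • f j : EuclideanSpace ℝ (Fin n)) : Fin n → ℝ)
          - ((cc • w : EuclideanSpace ℝ (Fin n)) : Fin n → ℝ)) : EuclideanSpace ℝ (Fin n))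
        = cc • (f j - w) := by
      show cc • f j - cc • w = cc • (f j - w)
      rw [smul_sub]
    have hdiff : sqNorm (((cc • f j : EuclideanSpace ℝ (Fin n)) : Fin n → ℝ)
        - ((cc • w : EuclideanSpace ℝ (Fin n)) : Fin n → ℝ))
        = ‖cc • (f j - w)‖ ^ 2 := by
      rw [sqNorm_eq, hee]
    rw [hdiff, Real.sqrt_sq (norm_nonneg _), norm_smul, Real.norm_eq_abs]
    have hkey : Real.sqrt n * Real.sqrt (phiMin X S) ≤ ‖f j - w‖ := by
      rw [← Real.sqrt_mul (le_of_lt hn0)]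
      calc Real.sqrt ((n:ℝ) * phiMin X S) ≤ Real.sqrt (‖f j - w‖^2) :=
            Real.sqrt_le_sqrt part3
        _ = ‖f j - w‖ := Real.sqrt_sq (norm_nonneg _)
    calc Real.sqrt n * Real.sqrt (phiMin X S) * |cc| ≤ ‖f j - w‖ * |cc| :=
          mul_le_mul_of_nonneg_right hkey (abs_nonneg _)
      _ = |cc| * ‖f j - w‖ := mul_comm _ _
  · -- Pythagoras
    have h0 : inner ℝ (f j - w) w = (0:ℝ) := by
      rw [real_inner_comm]
      exact (Submodule.sub_starProjection_mem_orthogonal (f j)) _ (Submodule.orthogonalProjection K' (f j)).2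
    have hpyth := norm_add_sq_real (f j - w) w
    simp only [sub_add_cancel, h0, mul_zero, add_zero] at hpyth
    rw [hsq_res, hproj1]
    have h1 : sqNorm (fun i => X i j) = ‖f j‖ ^ 2 := sqNorm_eq _
    have h2 : sqNorm (w : Fin n → ℝ) = ‖w‖ ^ 2 := sqNorm_eq _
    rw [h1, h2]
    linarith
  · rw [hsq_res]
    exact part3
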